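/- Let r ≥ 2 and M ≥ 2 be integers and let β be an integer with 2 ≤ β ≤ M. Set T(X) := r·∏_{j=1}^{M}(1−jX) ∈ ℤ[X] and B(X) := Σ_{j=1}^{β−1} j·∏_{1≤j'≤M, j'≠j}(1−j'X) ∈ ℤ[X]. Let D ≥ 0 and let P ∈ ℤ[X] have degree ≤ D. Define S_0 := P, S_{k+1} := T·S_k′ − k·T′·S_k + B·S_k, and P^{⟨k⟩} := S_k/k! ∈ ℚ[X]. Then for every k ≥ 0: (1) r^k·P^{⟨k⟩} has integer coefficients (that is, P^{⟨k⟩} is a polynomial with rational coefficients whose denominators divide r^k), and deg(P^{⟨k⟩}) ≤ D + k·M; (2) for every positive integer n, the rational number r^k·n^(D+kM)·P^{⟨k⟩}(1/n) is an integer. -/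

import Mathlib

/-- `T(X) = r·∏_{j=1}^{M} (1−jX) ∈ ℤ[X]`. -/
noncomputable def Tpoly (r M : ℕ) : Polynomial ℤ :=
  Polynomial.C (r : ℤ) * ∏ j ∈ Finset.Icc 1 M, (1 - Polynomial.C (j : ℤ) * Polynomial.X)

/-- `B(X) = Σ_{j=1}^{β−1} j·∏_{1≤j'≤M, j'≠j} (1−j'X) ∈ ℤ[X]` (equal to `T·A`). -/
noncomputable def Bpoly (M β : ℕ) : Polynomial ℤ :=
  ∑ j ∈ Finset.Icc 1 (β - 1),
    Polynomial.C (j : ℤ) *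
      ∏ j' ∈ (Finset.Icc 1 M).erase j, (1 - Polynomial.C (j' : ℤ) * Polynomial.X)

/-- The polynomials `S_k`, defined by `S_0 = P`, `S_{k+1} = T·S_k′ − k·T′·S_k + B·S_k`. -/
noncomputable def Sseq (T B P : Polynomial ℤ) : ℕ → Polynomial ℤ
  | 0 => P
  | k + 1 => T * Polynomial.derivative (Sseq T B P k)
      - (k : Polynomial ℤ) * Polynomial.derivative T * Sseq T B P k
      + B * Sseq T B P k

/-- The alternate Padé polynomials `P^{⟨k⟩} := S_k / k! ∈ ℚ[X]`. -/
noncomputable def Pang (T B P : Polynomial ℤ) (k : ℕ) : Polynomial ℚ :=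
  Polynomial.C ((k.factorial : ℚ)⁻¹) * (Sseq T B P k).map (Int.castRingHom ℚ)

open Polynomial Finset

/-! ### Auxiliary definitions and lemmas -/

/-- Generic version of `Sseq` over any commutative ring. -/
noncomputable def sseqR {A : Type*} [CommRing A] (t b q : Polynomial A) : ℕ → Polynomial A
  | 0 => q
  | k + 1 => t * Polynomial.derivative (sseqR t b q k)
      - (k : Polynomial A) * Polynomial.derivative t * sseqR t b q k
      + b * sseqR t b q k

lemma sseqR_mul_e {A : Type*} [CommRing A] (t b q e : Polynomial A)
    (h : t * derivative e = b * e) (k : ℕ) :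
    sseqR t b q k * e = t ^ k * derivative^[k] (e * q) := by
  induction k with
  | zero => simp [sseqR, mul_comm]
  | succ k ih =>
    set s := sseqR t b q k with hs
    set W := derivative^[k] (e * q) with hW
    have aux : t * (C (k : A) * t ^ (k - 1) * derivative t * W)
        = C (k : A) * t ^ k * derivative t * W := by
      cases k with
      | zero => simp
      | succ k => rw [Nat.add_sub_cancel]; ring
    have e1 : sseqR t b q (k + 1) * e
        = t * derivative (s * e) - (k : Polynomial A) * derivative t * (s * e) := by
      rw [derivative_mul]
      show (t * derivative s - (k : Polynomial A) * derivative t * s + b * s) * e = _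
      linear_combination (-s) * h
    rw [e1, ih, derivative_mul, derivative_pow, mul_add, aux,
      ← Polynomial.C_eq_natCast, mul_comm (C (k:A)) (t ^ k)]
    rw [Function.iterate_succ_apply']
    ring

lemma Sseq_map {A : Type*} [CommRing A] (f : ℤ →+* A) (T B P : Polynomial ℤ) (k : ℕ) :
    (Sseq T B P k).map f = sseqR (T.map f) (B.map f) (P.map f) k := by
  induction k with
  | zero => rfl
  | succ k ih =>
    rw [show Sseq T B P (k+1) = T * Polynomial.derivative (Sseq T B P k)
      - (k : Polynomial ℤ) * Polynomial.derivative T * Sseq T B P k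
      + B * Sseq T B P k from rfl]
    simp [Polynomial.map_add, Polynomial.map_sub, Polynomial.map_mul, ← derivative_map,
      Polynomial.map_natCast, ih, sseqR]

/-- cancellation by a polynomial with constant coefficient 1 -/
lemma cancel_of_coeff_zero_one {A : Type*} [CommRing A] (u v : Polynomial A)
    (hv : v.coeff 0 = 1) (h : u * v = 0) : u = 0 := by
  ext n
  induction n using Nat.strong_induction_on with
  | _ n ih =>
    have h0 : (u * v).coeff n = 0 := by rw [h]; simp
    rw [coeff_mul] at h0
    have : ∑ x ∈ Finset.HasAntidiagonal.antidiagonal n, u.coeff x.1 * v.coeff x.2 = u.coeff n := by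
      rw [Finset.sum_eq_single (n, 0)]
      · rw [hv, mul_one]
      · rintro ⟨i, j⟩ hij hne
        rw [Finset.HasAntidiagonal.mem_antidiagonal] at hij
        have hi : i < n := by
          rcases Nat.lt_or_ge i n with hlt | hge
          · exact hlt
          · exfalso; apply hne
            have : i = n := le_antisymm (by omega) hge
            simp [this] at hij ⊢; omega
        simp [ih i hi]
      · intro hmem; exfalso; exact hmem (by simp)
    rw [this] at h0
    simp [h0]

/-- The auxiliary polynomial `E(X) = ∏_{j=1}^{β−1} (1−jX)^c`. -/
noncomputable def Epoly (β c : ℕ) : Polynomial ℤ :=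
  ∏ j ∈ Finset.Icc 1 (β - 1), (1 - Polynomial.C (j : ℤ) * Polynomial.X) ^ c

lemma Epoly_coeff_zero (β c : ℕ) : (Epoly β c).coeff 0 = 1 := by
  rw [Epoly, Polynomial.coeff_zero_eq_eval_zero]
  simp [Polynomial.eval_prod]

lemma tpoly_single (r M c : ℕ) (hc : c ≠ 0) (j : ℕ) (hj : j ∈ Finset.Icc 1 M) :
    Tpoly r M * derivative ((1 - C (j : ℤ) * X) ^ c)
      = C (-(r * c : ℤ)) * (C (j : ℤ) * ∏ j' ∈ (Finset.Icc 1 M).erase j,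
          (1 - C (j' : ℤ) * X)) * (1 - C (j : ℤ) * X) ^ c := by
  obtain ⟨c', rfl⟩ := Nat.exists_eq_succ_of_ne_zero hc
  rw [derivative_pow]
  have hd : derivative (1 - C (j : ℤ) * X) = - C (j : ℤ) := by
    simp
  rw [hd, Tpoly, ← Finset.mul_prod_erase _ _ hj, Nat.succ_sub_one, pow_succ]
  push_cast
  simp only [map_neg, map_mul, map_add, map_one, Polynomial.C_1]
  ring

lemma tpoly_prod (r M c : ℕ) (hc : c ≠ 0) (s : Finset ℕ) (hs : s ⊆ Finset.Icc 1 M) :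
    Tpoly r M * derivative (∏ j ∈ s, (1 - C (j : ℤ) * X) ^ c)
      = C (-(r * c : ℤ)) * (∑ j ∈ s, C (j : ℤ) * ∏ j' ∈ (Finset.Icc 1 M).erase j,
          (1 - C (j' : ℤ) * X)) * ∏ j ∈ s, (1 - C (j : ℤ) * X) ^ c := by
  induction s using Finset.induction_on with
  | empty => simp
  | @insert a s' ha ih =>
    have haM : a ∈ Finset.Icc 1 M := hs (Finset.mem_insert_self a s')
    have hs' : s' ⊆ Finset.Icc 1 M := fun x hx => hs (Finset.mem_insert_of_mem hx)
    rw [Finset.prod_insert ha, Finset.sum_insert ha, derivative_mul, mul_add]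
    have ih' := ih hs'
    have h1 := tpoly_single r M c hc a haM
    calc Tpoly r M * (derivative ((1 - C (a:ℤ) * X) ^ c) * ∏ j ∈ s', (1 - C (j:ℤ) * X) ^ c)
          + Tpoly r M * ((1 - C (a:ℤ) * X) ^ c * derivative (∏ j ∈ s', (1 - C (j:ℤ) * X) ^ c))
        = (Tpoly r M * derivative ((1 - C (a:ℤ) * X) ^ c)) * ∏ j ∈ s', (1 - C (j:ℤ) * X) ^ c
          + (1 - C (a:ℤ) * X) ^ c *
            (Tpoly r M * derivative (∏ j ∈ s', (1 - C (j:ℤ) * X) ^ c)) := by ring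
      _ = _ := by rw [h1, ih']; ring

lemma TEprime (r M β c : ℕ) (hβM : β ≤ M) (hc : c ≠ 0) :
    Tpoly r M * derivative (Epoly β c)
      = C (-(r * c : ℤ)) * Bpoly M β * Epoly β c := by
  rw [Epoly, Bpoly, tpoly_prod r M c hc _ (by
    intro x hx
    rw [Finset.mem_Icc] at hx ⊢
    omega)]

lemma prime_pow_dvd_Sseq_coeff (r M β : ℕ) (hβM : β ≤ M)
    (P : Polynomial ℤ) (k : ℕ) (p : ℕ) (hp : p.Prime) (hpr : ¬ p ∣ r) (n : ℕ) :
    ((p : ℤ) ^ ((k.factorial).factorization p)) ∣ (Sseq (Tpoly r M) (Bpoly M β) P k).coeff n := by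
  set e := (k.factorial).factorization p with he
  rcases Nat.eq_zero_or_pos e with h0 | hpos
  · simp [h0]
  haveI : NeZero (p ^ e) := ⟨pow_ne_zero _ hp.ne_zero⟩
  haveI : Fact (1 < p ^ e) := ⟨Nat.one_lt_pow (by omega) hp.one_lt⟩
  set R := ZMod (p ^ e) with hR
  have hco : Nat.Coprime r (p ^ e) :=
    Nat.Coprime.pow_right e (Nat.coprime_comm.mp ((hp.coprime_iff_not_dvd).mpr hpr))
  set c : ℕ := (-(r : R)⁻¹).val with hcdef
  have hcR : (c : R) = -(r : R)⁻¹ := ZMod.natCast_zmod_val _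
  have hmulinv : (r : R) * (r : R)⁻¹ = 1 := ZMod.coe_mul_inv_eq_one r hco
  have hrc : ((r * c : ℕ) : R) = -1 := by
    push_cast
    rw [show ((r * c : ℕ) : R) = (r : R) * (c : R) from Nat.cast_mul (α := ZMod (p ^ e)) r c, hcR, mul_neg, hmulinv]
  have hc0 : c ≠ 0 := by
    intro h
    rw [h] at hcR
    rw [show ((0:ℕ) : R) = 0 by norm_num] at hcR
    have hinv0 : (r : R)⁻¹ = 0 := by rw [← neg_eq_zero, ← hcR]
    rw [hinv0, mul_zero] at hmulinv
    exact zero_ne_one hmulinv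
  set f : ℤ →+* R := Int.castRingHom R with hf
  have hTE : (Tpoly r M).map f * derivative ((Epoly β c).map f)
      = (Bpoly M β).map f * (Epoly β c).map f := by
    rw [derivative_map, ← Polynomial.map_mul, TEprime r M β c hβM hc0,
      Polynomial.map_mul, Polynomial.map_mul, Polynomial.map_C]
    have hone : (f (-(r * c : ℤ)) : R) = 1 := by
      have : ((r * c : ℤ) : R) = -1 := by exact_mod_cast hrc
      simp [this]
      exact neg_neg _
    rw [hone, Polynomial.C_1, one_mul]
  have hkey := sseqR_mul_e ((Tpoly r M).map f) ((Bpoly M β).map f) (P.map f)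
    ((Epoly β c).map f) hTE k
  rw [← Sseq_map] at hkey
  have hzero : derivative^[k] ((Epoly β c).map f * P.map f) = 0 := by
    rw [← Polynomial.map_mul, iterate_derivative_map]
    have hfac : derivative^[k] (Epoly β c * P)
        = (k.factorial : Polynomial ℤ) * Polynomial.hasseDeriv k (Epoly β c * P) := by
      have h1 := congrFun (Polynomial.factorial_smul_hasseDeriv (R := ℤ) k) (Epoly β c * P)
      rw [← h1]
      simp [nsmul_eq_mul]
    rw [hfac, Polynomial.map_mul, Polynomial.map_natCast]
    have hk0 : ((k.factorial : ℕ) : Polynomial R) = 0 := by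
      rw [← Polynomial.C_eq_natCast]
      have : ((k.factorial : ℕ) : R) = 0 :=
        (ZMod.natCast_eq_zero_iff _ _).mpr (Nat.ordProj_dvd _ _)
      rw [this, Polynomial.C_0]
    rw [hk0, zero_mul]
  rw [hzero, mul_zero] at hkey
  have hE0 : ((Epoly β c).map f).coeff 0 = 1 := by
    rw [Polynomial.coeff_map, Epoly_coeff_zero]
    simp
  have hS0 := cancel_of_coeff_zero_one _ _ hE0 hkey
  have hcn : (((Sseq (Tpoly r M) (Bpoly M β) P k).coeff n : ℤ) : R) = 0 := by
    have := congrArg (fun q : Polynomial R => q.coeff n) hS0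
    simpa [Polynomial.coeff_map] using this
  have := (ZMod.intCast_zmod_eq_zero_iff_dvd _ _).mp hcn
  exact_mod_cast this

lemma factorization_factorial_le' (p k : ℕ) (hp : p.Prime) :
    (k.factorial).factorization p ≤ k := by
  haveI : Fact p.Prime := ⟨hp⟩
  rw [Nat.factorization_def _ hp]
  have h1 : (p - 1) * padicValNat p (k.factorial) = k - (p.digits k).sum :=
    sub_one_mul_padicValNat_factorial k
  have h2 : padicValNat p (k.factorial) ≤ (p - 1) * padicValNat p (k.factorial) :=
    Nat.le_mul_of_pos_left _ (by have := hp.two_le; omega)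
  omega

lemma fac_dvd_rpow_mul (r k : ℕ) (hr : 2 ≤ r) (s : ℤ)
    (hprime : ∀ p : ℕ, p.Prime → ¬ p ∣ r → ((p : ℤ) ^ ((k.factorial).factorization p)) ∣ s) :
    (k.factorial : ℤ) ∣ (r : ℤ) ^ k * s := by
  by_cases hs : s = 0
  · simp [hs]
  rw [Int.natCast_dvd]
  have hN : ((r : ℤ) ^ k * s).natAbs = r ^ k * s.natAbs := by
    rw [Int.natAbs_mul, Int.natAbs_pow]
    simp
  rw [hN]
  have hNne : r ^ k * s.natAbs ≠ 0 := by
    have : s.natAbs ≠ 0 := Int.natAbs_ne_zero.mpr hs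
    positivity
  rw [← Nat.factorization_le_iff_dvd (Nat.factorial_ne_zero k) hNne]
  intro q
  by_cases hq : q.Prime
  · rw [Nat.factorization_mul (by positivity) (Int.natAbs_ne_zero.mpr hs),
      Nat.factorization_pow]
    simp only [Finsupp.coe_add, Finsupp.coe_smul, Pi.add_apply, Pi.smul_apply, smul_eq_mul]
    by_cases hqr : q ∣ r
    · have h1 : (k.factorial).factorization q ≤ k := factorization_factorial_le' q k hq
      have h2 : 1 ≤ r.factorization q := by
        rw [← Nat.Prime.pow_dvd_iff_le_factorization hq (by omega), pow_one]
        exact hqr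
      nlinarith [Nat.zero_le ((s.natAbs).factorization q)]
    · have hdvd := hprime q hq hqr
      have : (q : ℕ) ^ ((k.factorial).factorization q) ∣ s.natAbs := by
        rw [← Int.natCast_dvd] at *
        exact_mod_cast hdvd
      have := (Nat.Prime.pow_dvd_iff_le_factorization hq (Int.natAbs_ne_zero.mpr hs)).mp this
      omega
  · simp [Nat.factorization_eq_zero_of_not_prime _ hq]

lemma natDegree_lin (a : ℕ) : (1 - Polynomial.C (a : ℤ) * Polynomial.X).natDegree ≤ 1 := by
  apply le_trans (natDegree_sub_le _ _)
  apply max_le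
  · simp
  · exact le_trans (natDegree_C_mul_le _ _) natDegree_X_le

lemma natDegree_prod_lin (s : Finset ℕ) :
    (∏ j ∈ s, (1 - Polynomial.C (j:ℤ) * Polynomial.X)).natDegree ≤ s.card := by
  apply le_trans (natDegree_prod_le s (fun j => 1 - Polynomial.C (j:ℤ) * Polynomial.X))
  have h := Finset.sum_le_sum (fun j (_ : j ∈ s) => natDegree_lin j)
  simpa using h

lemma natDegree_T (r M : ℕ) : (Tpoly r M).natDegree ≤ M := by
  rw [Tpoly]
  apply le_trans (natDegree_C_mul_le _ _)
  simpa using natDegree_prod_lin (Finset.Icc 1 M)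

lemma natDegree_B (M β : ℕ) : (Bpoly M β).natDegree ≤ M := by
  rw [Bpoly]
  apply Polynomial.natDegree_sum_le_of_forall_le
  intro j hj
  apply le_trans (natDegree_mul_le)
  have h1 : (Polynomial.C (j:ℤ)).natDegree = 0 := natDegree_C _
  have h2 : (∏ j' ∈ (Finset.Icc 1 M).erase j,
      (1 - Polynomial.C (j':ℤ) * Polynomial.X)).natDegree ≤ M := by
    apply le_trans (natDegree_prod_lin _)
    exact le_trans (Finset.card_le_card (Finset.erase_subset _ _)) (by simp)
  omega

lemma natDegree_Sseq (r M β D : ℕ) (P : Polynomial ℤ) (hdeg : P.natDegree ≤ D) (k : ℕ) :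
    (Sseq (Tpoly r M) (Bpoly M β) P k).natDegree ≤ D + k * M := by
  induction k with
  | zero => simpa [Sseq] using hdeg
  | succ k ih =>
    show (Tpoly r M * Polynomial.derivative (Sseq _ _ P k)
      - (k : Polynomial ℤ) * Polynomial.derivative (Tpoly r M) * Sseq _ _ P k
      + Bpoly M β * Sseq _ _ P k).natDegree ≤ D + (k+1) * M
    apply le_trans (natDegree_add_le _ _)
    have hT := natDegree_T r M
    have hB := natDegree_B M β
    have hdT : (Polynomial.derivative (Tpoly r M)).natDegree ≤ M :=
      le_trans (natDegree_derivative_le _) (by omega)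
    have hdS : (Polynomial.derivative (Sseq (Tpoly r M) (Bpoly M β) P k)).natDegree ≤ D + k * M :=
      le_trans (natDegree_derivative_le _) (by omega)
    have h1 : (Tpoly r M * Polynomial.derivative (Sseq (Tpoly r M) (Bpoly M β) P k)).natDegree
        ≤ D + (k+1) * M := by
      apply le_trans (natDegree_mul_le)
      ring_nf
      omega
    have h2 : ((k : Polynomial ℤ) * Polynomial.derivative (Tpoly r M)
        * Sseq (Tpoly r M) (Bpoly M β) P k).natDegree ≤ D + (k+1) * M := by
      apply le_trans (natDegree_mul_le)
      have : ((k : Polynomial ℤ) * Polynomial.derivative (Tpoly r M)).natDegree ≤ M := by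
        apply le_trans (natDegree_mul_le)
        simp [Polynomial.natDegree_natCast]
        omega
      ring_nf
      omega
    have h3 : (Bpoly M β * Sseq (Tpoly r M) (Bpoly M β) P k).natDegree ≤ D + (k+1) * M := by
      apply le_trans (natDegree_mul_le)
      ring_nf
      omega
    have h12 := le_trans (natDegree_sub_le _ _) (max_le h1 h2)
    exact max_le h12 h3

/-- **Rational numbers from Padé polynomials** (Lemma 6.4).
(1) `r^k·P^{⟨k⟩}` has integer coefficients, and `deg(P^{⟨k⟩}) ≤ D + kM`;
(2) for every positive integer `n`, `r^k·n^(D+kM)·P^{⟨k⟩}(1/n)` is an integer. -/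
theorem rationals_from_pade_polynomials (r M : ℕ) (hr : 2 ≤ r) (hM : 2 ≤ M)
    (β : ℕ) (hβ : 2 ≤ β) (hβM : β ≤ M)
    (D : ℕ) (P : Polynomial ℤ) (hdeg : P.natDegree ≤ D) (k : ℕ) :
    (∀ v : ℕ, ∃ m : ℤ,
        (r : ℚ) ^ k * (Pang (Tpoly r M) (Bpoly M β) P k).coeff v = (m : ℚ)) ∧
    (Pang (Tpoly r M) (Bpoly M β) P k).natDegree ≤ D + k * M ∧
    (∀ n : ℕ, 0 < n → ∃ m : ℤ,
        (r : ℚ) ^ k * (n : ℚ) ^ (D + k * M)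
            * Polynomial.eval (1 / (n : ℚ)) (Pang (Tpoly r M) (Bpoly M β) P k)
          = (m : ℚ)) := by
  have hdvd : ∀ v : ℕ, (k.factorial : ℤ) ∣
      (r : ℤ) ^ k * (Sseq (Tpoly r M) (Bpoly M β) P k).coeff v := by
    intro v
    apply fac_dvd_rpow_mul r k hr
    intro p hp hpr
    exact prime_pow_dvd_Sseq_coeff r M β hβM P k p hp hpr v
  choose g hg using fun v => hdvd v
  have hkQ : (k.factorial : ℚ) ≠ 0 := by
    exact_mod_cast Nat.factorial_ne_zero k
  have hcoeff : ∀ v : ℕ, (Pang (Tpoly r M) (Bpoly M β) P k).coeff v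
      = (k.factorial : ℚ)⁻¹ * ((Sseq (Tpoly r M) (Bpoly M β) P k).coeff v : ℚ) := by
    intro v
    rw [Pang, coeff_C_mul, coeff_map]
    rfl
  have hcoeffQ : ∀ v : ℕ, (r : ℚ) ^ k * (Pang (Tpoly r M) (Bpoly M β) P k).coeff v
      = (g v : ℚ) := by
    intro v
    rw [hcoeff v]
    have h := hg v
    have hQ : ((r : ℤ) ^ k * (Sseq (Tpoly r M) (Bpoly M β) P k).coeff v : ℚ)
        = ((k.factorial : ℤ) * g v : ℚ) := by exact_mod_cast congrArg (Int.cast : ℤ → ℚ) h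
    push_cast at hQ ⊢
    field_simp
    linarith [hQ]
  have hdegPang : (Pang (Tpoly r M) (Bpoly M β) P k).natDegree ≤ D + k * M := by
    rw [Pang]
    apply le_trans (natDegree_C_mul_le _ _)
    apply le_trans natDegree_map_le
    exact natDegree_Sseq r M β D P hdeg k
  refine ⟨fun v => ⟨g v, hcoeffQ v⟩, hdegPang, ?_⟩
  intro n hn
  set N := D + k * M with hN
  have hlt : (Pang (Tpoly r M) (Bpoly M β) P k).natDegree < N + 1 := Nat.lt_succ_of_le hdegPang
  refine ⟨∑ v ∈ Finset.range (N + 1), g v * (n : ℤ) ^ (N - v), ?_⟩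
  rw [Polynomial.eval_eq_sum_range' hlt]
  have hnne : (n : ℚ) ≠ 0 := by positivity
  rw [Finset.mul_sum]
  push_cast
  apply Finset.sum_congr rfl
  intro v hv
  have hvN : v ≤ N := by
    rw [Finset.mem_range] at hv
    omega
  have hsplit : (n : ℚ) ^ N = (n : ℚ) ^ (N - v) * (n : ℚ) ^ v := by
    rw [← pow_add]
    congr 1
    omega
  calc (r : ℚ) ^ k * (n : ℚ) ^ N
        * ((Pang (Tpoly r M) (Bpoly M β) P k).coeff v * (1 / (n : ℚ)) ^ v)
      = ((r : ℚ) ^ k * (Pang (Tpoly r M) (Bpoly M β) P k).coeff v)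
        * ((n : ℚ) ^ N * (1 / (n : ℚ)) ^ v) := by ring
    _ = (g v : ℚ) * (n : ℚ) ^ (N - v) := by
        rw [hcoeffQ v, hsplit]
        field_simp
        rw [one_div, inv_pow, mul_assoc, mul_inv_cancel₀ (pow_ne_zero _ hnne), mul_one]
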